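/- (Result 1) Let e_k^* be the optimal value of the M = 1 dual Problem (2) and θ_k^D the optimal value of D(D) attained at (u*, v*, w*). If −u* x_k + v* y_k + w* ≤ 0, then e_k^* = M·θ_k^D. -/

import Mathlib

open Finset

/-- Feasibility for the primal problem P(S) (inputs scaled by M at DMU k). -/
def PFeas {ι : Type*} [DecidableEq ι] {m n : ℕ} (S : Finset ι) (k : ι) (M : ℝ)
    (x : ι → Fin m → ℝ) (y : ι → Fin n → ℝ) (θ : ℝ) (lam : ι → ℝ) : Prop :=
  (∀ i, lam k * (M * x k i) + ∑ r ∈ S.erase k, lam r * x r i ≤ θ * (M * x k i)) ∧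
  (∀ j, y k j ≤ lam k * y k j + ∑ r ∈ S.erase k, lam r * y r j) ∧
  (∑ r ∈ S, lam r = 1) ∧
  (∀ r ∈ S, 0 ≤ lam r)

/-- Feasibility for the dual problem D(D). -/
def DFeas {ι : Type*} [DecidableEq ι] {m n : ℕ} (D : Finset ι) (k : ι) (M : ℝ)
    (x : ι → Fin m → ℝ) (y : ι → Fin n → ℝ)
    (u : Fin m → ℝ) (v : Fin n → ℝ) (w : ℝ) : Prop :=
  (∑ i, u i * (M * x k i)) = 1 ∧
  (∀ r ∈ D.erase k, -(∑ i, u i * x r i) + (∑ j, v j * y r j) + w ≤ 0) ∧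
  (-(∑ i, u i * (M * x k i)) + (∑ j, v j * y k j) + w ≤ 0) ∧
  (∀ i, 0 ≤ u i) ∧ (∀ j, 0 ≤ v j)

/-- Feasibility for the M = 1 dual Problem (2). -/
def Feas2 {ι : Type*} {m n : ℕ} (D : Finset ι) (k : ι)
    (x : ι → Fin m → ℝ) (y : ι → Fin n → ℝ)
    (u : Fin m → ℝ) (v : Fin n → ℝ) (w : ℝ) : Prop :=
  (∑ i, u i * x k i) = 1 ∧
  (∀ r ∈ D, -(∑ i, u i * x r i) + (∑ j, v j * y r j) + w ≤ 0) ∧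
  (∀ i, 0 ≤ u i) ∧ (∀ j, 0 ≤ v j)

/-- Feasibility for the standard primal Problem (1). -/
def Feas1 {ι : Type*} {m n : ℕ} (D : Finset ι) (k : ι)
    (x : ι → Fin m → ℝ) (y : ι → Fin n → ℝ) (θ : ℝ) (lam : ι → ℝ) : Prop :=
  (∀ i, ∑ r ∈ D, lam r * x r i ≤ θ * x k i) ∧
  (∀ j, y k j ≤ ∑ r ∈ D, lam r * y r j) ∧
  (∑ r ∈ D, lam r = 1) ∧
  (∀ r ∈ D, 0 ≤ lam r)


theorem stmt5 {ι : Type*} [DecidableEq ι] {m n : ℕ} (D : Finset ι) (k : ι) (hk : k ∈ D)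
    (M : ℝ) (hM : 1 ≤ M) (x : ι → Fin m → ℝ) (y : ι → Fin n → ℝ)
    (hx : ∀ r ∈ D, ∀ i, 0 < x r i)
    (u : Fin m → ℝ) (v : Fin n → ℝ) (w : ℝ)
    (hfeas : DFeas D k M x y u v w)
    (θD : ℝ) (hval : θD = (∑ j, v j * y k j) + w)
    (hopt : IsGreatest {c : ℝ | ∃ u' : Fin m → ℝ, ∃ v' : Fin n → ℝ, ∃ w' : ℝ,
        DFeas D k M x y u' v' w' ∧ c = (∑ j, v' j * y k j) + w'} θD)
    (e : ℝ)
    (he : IsGreatest {c : ℝ | ∃ u' : Fin m → ℝ, ∃ v' : Fin n → ℝ, ∃ w' : ℝ,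
        Feas2 D k x y u' v' w' ∧ c = (∑ j, v' j * y k j) + w'} e)
    (hcond : -(∑ i, u i * x k i) + (∑ j, v j * y k j) + w ≤ 0) :
    e = M * θD := by
  have hM0 : (0:ℝ) < M := lt_of_lt_of_le one_pos hM
  obtain ⟨hn, hrest, hkc, hu0, hv0⟩ := hfeas
  -- Direction 1: M * θD is Feas2-attainable via (M•u, M•v, M•w)
  have h1 : M * θD ∈ {c : ℝ | ∃ u' : Fin m → ℝ, ∃ v' : Fin n → ℝ, ∃ w' : ℝ,
      Feas2 D k x y u' v' w' ∧ c = (∑ j, v' j * y k j) + w'} := by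
    refine ⟨fun i => M * u i, fun j => M * v j, M * w, ⟨?_, ?_, ?_, ?_⟩, ?_⟩
    · calc (∑ i, (M * u i) * x k i) = ∑ i, u i * (M * x k i) := by
            exact Finset.sum_congr rfl fun i _ => by ring
        _ = 1 := hn
    · intro r hr
      have hs1 : (∑ i, (M * u i) * x r i) = M * ∑ i, u i * x r i := by
        rw [Finset.mul_sum]; exact Finset.sum_congr rfl fun i _ => by ring
      have hs2 : (∑ j, (M * v j) * y r j) = M * ∑ j, v j * y r j := by
        rw [Finset.mul_sum]; exact Finset.sum_congr rfl fun i _ => by ring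
      rw [hs1, hs2]
      by_cases hrk : r = k
      · subst hrk
        nlinarith [hcond]
      · have := hrest r (Finset.mem_erase.mpr ⟨hrk, hr⟩)
        nlinarith [this]
    · exact fun i => mul_nonneg hM0.le (hu0 i)
    · exact fun j => mul_nonneg hM0.le (hv0 j)
    · have hs2 : (∑ j, (M * v j) * y k j) = M * ∑ j, v j * y k j := by
        rw [Finset.mul_sum]; exact Finset.sum_congr rfl fun i _ => by ring
      rw [hs2, hval]; ring
  have hge : M * θD ≤ e := he.2 h1
  -- Direction 2: e / M is DFeas-attainable
  obtain ⟨u', v', w', ⟨h2n, h2r, h2u, h2v⟩, hev⟩ := he.1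
  have h2 : e / M ∈ {c : ℝ | ∃ u' : Fin m → ℝ, ∃ v' : Fin n → ℝ, ∃ w' : ℝ,
      DFeas D k M x y u' v' w' ∧ c = (∑ j, v' j * y k j) + w'} := by
    have hsx : ∀ r, (∑ i, (u' i / M) * x r i) = (∑ i, u' i * x r i) / M := by
      intro r; rw [Finset.sum_div]; exact Finset.sum_congr rfl fun i _ => by ring
    have hsy : ∀ r, (∑ j, (v' j / M) * y r j) = (∑ j, v' j * y r j) / M := by
      intro r; rw [Finset.sum_div]; exact Finset.sum_congr rfl fun i _ => by ring
    have hsk : (∑ i, (u' i / M) * (M * x k i)) = ∑ i, u' i * x k i := by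
      exact Finset.sum_congr rfl fun i _ => by field_simp
    refine ⟨fun i => u' i / M, fun j => v' j / M, w' / M, ⟨?_, ?_, ?_, ?_, ?_⟩, ?_⟩
    · rw [hsk, h2n]
    · intro r hr
      have := h2r r (Finset.mem_of_mem_erase hr)
      rw [hsx, hsy]
      have h : (-(∑ i, u' i * x r i) + (∑ j, v' j * y r j) + w') / M ≤ 0 :=
        div_nonpos_of_nonpos_of_nonneg this hM0.le
      have hd : (-(∑ i, u' i * x r i) + (∑ j, v' j * y r j) + w') / M
          = -((∑ i, u' i * x r i) / M) + (∑ j, v' j * y r j) / M + w' / M := by ring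
      linarith [hd ▸ h]
    · rw [hsk, hsy, h2n]
      have hkk := h2r k hk
      rw [h2n] at hkk
      have h1' : (∑ j, v' j * y k j) + w' ≤ 1 := by linarith
      have : ((∑ j, v' j * y k j) + w') / M ≤ 1 := by
        rw [div_le_one hM0]; linarith
      have hd : ((∑ j, v' j * y k j) + w') / M = (∑ j, v' j * y k j) / M + w' / M := by
        ring
      linarith [hd ▸ this]
    · exact fun i => div_nonneg (h2u i) hM0.le
    · exact fun j => div_nonneg (h2v j) hM0.le
    · rw [hsy, hev]; ring
  have hle : e / M ≤ θD := hopt.2 h2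
  have : e ≤ M * θD := by
    rw [div_le_iff₀ hM0] at hle; linarith
  linarith
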